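/- Let η ∈ ∧²V* have kernel K = ker(η♯) and let G be a complement of K in V. Then the subspace G ⊕ K* := {(g, ξ) : g ∈ G, ξ ∈ V* with ξ|_G = 0} ⊆ V ⊕ V* is a Lagrangian subspace transverse to graph(η) = {(v, η♯v) : v ∈ V}. -/

import Mathlib

open Module

/-- The canonical symmetric pairing on `V ⊕ V*`: `⟨(v,ξ),(w,χ)⟩ = ξ(w) + χ(v)`. -/
noncomputable def pairing (V : Type*) [AddCommGroup V] [Module ℝ V] :
    (V × Module.Dual ℝ V) →ₗ[ℝ] (V × Module.Dual ℝ V) →ₗ[ℝ] ℝ :=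
  LinearMap.mk₂ ℝ (fun p q => p.2 q.1 + q.2 p.1)
    (by intro m₁ m₂ n; simp; ring)
    (by intro c m n; simp; ring)
    (by intro m n₁ n₂; simp; ring)
    (by intro m c n; simp; ring)

/-- A submodule product is linearly equivalent to the product of the submodules. -/
def prodSubEquiv {R M N : Type*} [CommRing R] [AddCommGroup M] [AddCommGroup N]
    [Module R M] [Module R N] (p : Submodule R M) (q : Submodule R N) :
    (p.prod q) ≃ₗ[R] p × q where
  toFun x := (⟨x.1.1, x.2.1⟩, ⟨x.1.2, x.2.2⟩)
  invFun x := ⟨(x.1.1, x.2.1), ⟨x.1.2, x.2.2⟩⟩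
  map_add' x y := rfl
  map_smul' c x := rfl
  left_inv x := rfl
  right_inv x := rfl

/-- let `η ∈ ∧²V*` have kernel `K = ker η♯` and let `G` be a
complement of `K` in `V`.  Then `G ⊕ K* := {(g,ξ) : g ∈ G, ξ|_G = 0}` (with `K*`
identified with the annihilator `G°`) is a Lagrangian subspace of `V ⊕ V*`
transverse to `graph(η) = {(v, η♯v) : v ∈ V}`. -/
theorem G_plus_Kstar_lagrangian_transverse_to_graph
    (V : Type*) [AddCommGroup V] [Module ℝ V] [FiniteDimensional ℝ V]
    (η : V →ₗ[ℝ] Module.Dual ℝ V) (hη : ∀ v w : V, η v w = - η w v)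
    (G : Submodule ℝ V) (hG : IsCompl (LinearMap.ker η) G) :
    (∀ p ∈ G.prod G.dualAnnihilator, ∀ q ∈ G.prod G.dualAnnihilator,
        pairing V p q = 0) ∧
    Module.finrank ℝ (G.prod G.dualAnnihilator) = Module.finrank ℝ V ∧
    IsCompl (G.prod G.dualAnnihilator) (LinearMap.graph η) := by
  -- finrank of the Lagrangian
  have hrank : Module.finrank ℝ (G.prod G.dualAnnihilator) = Module.finrank ℝ V := by
    haveI : Module.Free ℝ (↥G.dualAnnihilator) := Module.Free.of_basis (Basis.ofVectorSpace ℝ (↥G.dualAnnihilator))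
    have e : Module.finrank ℝ (G.prod G.dualAnnihilator)
        = Module.finrank ℝ (G × G.dualAnnihilator) :=
      LinearEquiv.finrank_eq (prodSubEquiv G G.dualAnnihilator)
    rw [e, Module.finrank_prod]
    have h1 : Module.finrank ℝ G.dualAnnihilator = Module.finrank ℝ (V ⧸ G) :=
      (LinearEquiv.finrank_eq (Subspace.quotEquivAnnihilator G)).symm
    have h2 := Submodule.finrank_quotient_add_finrank G
    omega
  refine ⟨?_, hrank, ?_⟩
  · rintro ⟨g, ξ⟩ ⟨hg, hξ⟩ ⟨h, χ⟩ ⟨hh, hχ⟩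
    rw [SetLike.mem_coe, Submodule.mem_dualAnnihilator] at hξ hχ
    simp [pairing, hξ h hh, hχ g hg]
  · -- disjointness
    have hdisj : Disjoint (G.prod G.dualAnnihilator) (LinearMap.graph η) := by
      rw [Submodule.disjoint_def]
      rintro ⟨v, ξ⟩ ⟨hv, hξ⟩ hgr
      rw [LinearMap.mem_graph_iff] at hgr
      simp only at hgr
      subst hgr
      rw [SetLike.mem_coe, Submodule.mem_dualAnnihilator] at hξ
      -- η v vanishes on G (by hξ) and on ker η, hence η v = 0
      have hv0 : v ∈ LinearMap.ker η := by
        rw [LinearMap.mem_ker]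
        ext w
        obtain ⟨k, g, hk, hg, rfl⟩ :=
          Submodule.codisjoint_iff_exists_add_eq.mp hG.codisjoint w
        have h1 : η v k = 0 := by
          rw [hη v k]
          have : η k = 0 := hk
          simp [this]
        have h2 : η v g = 0 := hξ g hg
        simp [h1, h2]
      have : v = 0 := by
        have := hG.disjoint.eq_bot ▸ Submodule.mem_inf.mpr ⟨hv0, hv⟩
        simpa [hG.disjoint.eq_bot] using Submodule.mem_inf.mpr ⟨hv0, hv⟩
      subst this
      simp
    -- graph has finrank = dim V
    have hgraph : LinearMap.graph η = LinearMap.range (LinearMap.prod LinearMap.id η) := by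
      ext x
      simp only [LinearMap.mem_graph_iff, LinearMap.mem_range, LinearMap.prod_apply,
        Function.prod, LinearMap.id_apply]
      constructor
      · intro h; exact ⟨x.1, by rw [← h]⟩
      · rintro ⟨y, rfl⟩; rfl
    have hginj : Function.Injective (LinearMap.prod LinearMap.id η) := by
      intro a b hab
      simpa using congrArg Prod.fst hab
    have hgr : Module.finrank ℝ (LinearMap.graph η) = Module.finrank ℝ V := by
      rw [hgraph, LinearMap.finrank_range_of_inj hginj]
    refine ⟨hdisj, ?_⟩
    rw [codisjoint_iff]
    apply Submodule.eq_top_of_finrank_eq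
    have := Submodule.finrank_sup_add_finrank_inf_eq (G.prod G.dualAnnihilator)
      (LinearMap.graph η)
    rw [hdisj.eq_bot] at this
    simp only [finrank_bot, add_zero] at this
    rw [this, hrank, hgr, Module.finrank_prod, Subspace.dual_finrank_eq]
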